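/- Linear iteration in LFPL: let f : (A ⊗ L(1)) ⊸ (A ⊗ L(1)) be a closed LFPL term. Then there exists a closed term f^♯ : (A ⊗ L(1)) ⊸ (A ⊗ L(1)) such that for all x ∈ ⟦A⟧ and n ∈ ⟦L(1)⟧, ⟦f^♯⟧(x, n) = ⟦f⟧^{|n|}(x, n), i.e. the denotation of f is iterated |n| times starting from (x, n). -/

import Mathlib

/-! # LFPL: syntax and denotational semantics -/

/-- LFPL types: diamond, unit, sums, tensor products, linear functions, lists. -/
inductive Tp : Type
  | dia : Tp
  | unit : Tp
  | sum (A B : Tp) : Tp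
  | tens (A B : Tp) : Tp
  | arr (A B : Tp) : Tp
  | list (A : Tp) : Tp

/-- Typing contexts: a list of declarations; `none` marks an unusable slot
(used for context splitting in the affine type system). -/
abbrev Ctx := List (Option Tp)

/-- De Bruijn variable lookup. -/
inductive Lk : Ctx → Tp → Type
  | here {A : Tp} {G : Ctx} : Lk (some A :: G) A
  | there {o : Option Tp} {A : Tp} {G : Ctx} : Lk G A → Lk (o :: G) A

/-- Splitting a context into two halves (each declared variable is usable
in exactly one half): this enforces the affine discipline. -/
inductive Split : Ctx → Ctx → Ctx → Type
  | nil : Split [] [] []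
  | skip {G G1 G2} : Split G G1 G2 → Split (none :: G) (none :: G1) (none :: G2)
  | left {A : Tp} {G G1 G2} : Split G G1 G2 → Split (some A :: G) (some A :: G1) (none :: G2)
  | right {A : Tp} {G G1 G2} : Split G G1 G2 → Split (some A :: G) (none :: G1) (some A :: G2)

/-- Intrinsically typed LFPL terms: `Term G A` are the terms `M` with `G ⊢ M : A`. -/
inductive Term : Ctx → Tp → Type
  | var {G A} : Lk G A → Term G A
  | null {G} : Term G .unit
  | inj1 {G A B} : Term G A → Term G (.sum A B)
  | inj2 {G A B} : Term G B → Term G (.sum A B)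
  | scase {G G1 G2 A B C} : Split G G1 G2 → Term G1 (.sum A B) →
      Term (some A :: G2) C → Term (some B :: G2) C → Term G C
  | pair {G G1 G2 A B} : Split G G1 G2 → Term G1 A → Term G2 B → Term G (.tens A B)
  | letp {G G1 G2 A B C} : Split G G1 G2 → Term G1 (.tens A B) →
      Term (some B :: some A :: G2) C → Term G C
  | lam {G A B} : Term (some A :: G) B → Term G (.arr A B)
  | app {G G1 G2 A B} : Split G G1 G2 → Term G1 (.arr A B) → Term G2 A → Term G B
  | nil {G A} : Term G (.list A)
  | cons {G G1 G23 G2 G3 A} : Split G G1 G23 → Split G23 G2 G3 →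
      Term G1 .dia → Term G2 A → Term G3 (.list A) → Term G (.list A)
  | lrec {G G1 G2 A B} : Split G G1 G2 → Term G1 (.list A) → Term G2 B →
      Term [some B, some A, some .dia] B → Term G B

/-- Set-theoretic denotational semantics of types. -/
def Tp.sem : Tp → Type
  | .dia => Unit
  | .unit => Unit
  | .sum A B => A.sem ⊕ B.sem
  | .tens A B => A.sem × B.sem
  | .arr A B => A.sem → B.sem
  | .list A => List A.sem

/-- Denotation of contexts (environments of semantic values). -/
def CtxSem : Ctx → Type
  | [] => PUnit
  | some A :: G => Tp.sem A × CtxSem G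
  | none :: G => CtxSem G

def Lk.sem : {G : Ctx} → {A : Tp} → Lk G A → CtxSem G → Tp.sem A
  | some _ :: _, _, .here, η => η.1
  | some _ :: _, _, .there l, η => Lk.sem l η.2
  | none :: _, _, .there l, η => Lk.sem l η

def Split.sub1 : {G G1 G2 : Ctx} → Split G G1 G2 → CtxSem G → CtxSem G1
  | _, _, _, .nil, _ => PUnit.unit
  | _, _, _, .skip s, η => s.sub1 η
  | _, _, _, .left s, η => (η.1, s.sub1 η.2)
  | _, _, _, .right s, η => s.sub1 η.2

def Split.sub2 : {G G1 G2 : Ctx} → Split G G1 G2 → CtxSem G → CtxSem G2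
  | _, _, _, .nil, _ => PUnit.unit
  | _, _, _, .skip s, η => s.sub2 η
  | _, _, _, .left s, η => s.sub2 η.2
  | _, _, _, .right s, η => (η.1, s.sub2 η.2)

/-- Denotational semantics of terms.  The `cons` case ignores its diamond
argument, and the list recursor is interpreted by iteration over sequences. -/
def Term.sem : {G : Ctx} → {A : Tp} → Term G A → CtxSem G → Tp.sem A
  | _, _, .var l, η => l.sem η
  | _, _, .null, _ => ()
  | _, _, .inj1 M, η => Sum.inl (M.sem η)
  | _, _, .inj2 M, η => Sum.inr (M.sem η)
  | _, _, .scase s M N1 N2, η =>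
      match M.sem (s.sub1 η) with
      | Sum.inl a => N1.sem (a, s.sub2 η)
      | Sum.inr b => N2.sem (b, s.sub2 η)
  | _, _, .pair s M1 M2, η => (M1.sem (s.sub1 η), M2.sem (s.sub2 η))
  | _, _, .letp s M N, η => N.sem ((M.sem (s.sub1 η)).2, ((M.sem (s.sub1 η)).1, s.sub2 η))
  | _, _, .lam M, η => fun a => M.sem (a, η)
  | _, _, .app s M N, η => M.sem (s.sub1 η) (N.sem (s.sub2 η))
  | _, _, .nil, _ => []
  | _, _, .cons s1 s2 _ Mh Mt, η =>
      Mh.sem (s2.sub1 (s1.sub2 η)) :: Mt.sem (s2.sub2 (s1.sub2 η))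
  | _, _, .lrec s M N1 N2, η =>
      (M.sem (s.sub1 η)).foldr (fun a b => N2.sem (b, (a, ((), PUnit.unit)))) (N1.sem (s.sub2 η))

/-- Diamond-free types. -/
inductive DFree : Tp → Prop
  | unit : DFree .unit
  | sum {A B : Tp} : DFree A → DFree B → DFree (.sum A B)
  | tens {A B : Tp} : DFree A → DFree B → DFree (.tens A B)

/-- The type `L(1)` of unit lists. -/
def unitL : Tp := .list .unit
/-! Weakening infrastructure -/

inductive Wk : Ctx → Ctx → Type
  | nil : Wk [] []
  | keep (o : Option Tp) {G G' : Ctx} : Wk G G' → Wk (o :: G) (o :: G')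
  | drop (o : Option Tp) {G G' : Ctx} : Wk G G' → Wk G (o :: G')

def Wk.sem : {G G' : Ctx} → Wk G G' → CtxSem G' → CtxSem G
  | _, _, .nil, _ => PUnit.unit
  | _, _, .keep (some _) w, η => (η.1, w.sem η.2)
  | _, _, .keep none w, η => w.sem η
  | _, _, .drop (some _) w, η => w.sem η.2
  | _, _, .drop none w, η => w.sem η

def Lk.ren : {G G' : Ctx} → {A : Tp} → Wk G G' → Lk G A → Lk G' A
  | _, _, _, .keep _ _, .here => .here
  | _, _, _, .keep _ w, .there l => .there (Lk.ren w l)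
  | _, _, _, .drop _ w, l => .there (Lk.ren w l)

theorem Lk.ren_sem : {G G' : Ctx} → {A : Tp} → (w : Wk G G') → (l : Lk G A) →
    (η : CtxSem G') → (Lk.ren w l).sem η = l.sem (w.sem η)
  | _, _, _, .keep (some _) _, .here, η => rfl
  | _, _, _, .keep (some _) w, .there l, η => Lk.ren_sem w l η.2
  | _, _, _, .keep none w, .there l, η => Lk.ren_sem w l η
  | _, _, _, .drop (some _) w, l, η => Lk.ren_sem w l η.2
  | _, _, _, .drop none w, l, η => Lk.ren_sem w l η

structure SplitRes {G G' G1 G2 : Ctx} (w : Wk G G') (s : Split G G1 G2) where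
  G1' : Ctx
  G2' : Ctx
  s' : Split G' G1' G2'
  w1 : Wk G1 G1'
  w2 : Wk G2 G2'
  h1 : ∀ η, w1.sem (s'.sub1 η) = s.sub1 (w.sem η)
  h2 : ∀ η, w2.sem (s'.sub2 η) = s.sub2 (w.sem η)

def Wk.split : {G G' G1 G2 : Ctx} → (w : Wk G G') → (s : Split G G1 G2) → SplitRes w s
  | _, _, _, _, .nil, .nil =>
      ⟨[], [], .nil, .nil, .nil, fun _ => rfl, fun _ => rfl⟩
  | _, _, _, _, .keep _ w, .skip s =>
      let r := w.split s
      ⟨_, _, .skip r.s', .keep none r.w1, .keep none r.w2,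
        fun η => r.h1 η, fun η => r.h2 η⟩
  | _, _, _, _, .keep _ w, .left s =>
      let r := w.split s
      ⟨_, _, .left r.s', .keep _ r.w1, .keep none r.w2,
        fun η => by simp only [Wk.sem, Split.sub1, r.h1]; rfl, fun η => r.h2 η.2⟩
  | _, _, _, _, .keep _ w, .right s =>
      let r := w.split s
      ⟨_, _, .right r.s', .keep none r.w1, .keep _ r.w2,
        fun η => r.h1 η.2, fun η => by simp only [Wk.sem, Split.sub2, r.h2]; rfl⟩
  | _, _, _, _, .drop (some A) w, s =>
      let r := w.split s
      ⟨_, _, .left r.s', .drop (some A) r.w1, .drop none r.w2,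
        fun η => r.h1 η.2, fun η => r.h2 η.2⟩
  | _, _, _, _, .drop none w, s =>
      let r := w.split s
      ⟨_, _, .skip r.s', .drop none r.w1, .drop none r.w2,
        fun η => r.h1 η, fun η => r.h2 η⟩

def Term.ren : {G G' : Ctx} → {A : Tp} → (w : Wk G G') → Term G A → Term G' A
  | _, _, _, w, .var l => .var (l.ren w)
  | _, _, _, _, .null => .null
  | _, _, _, w, .inj1 M => .inj1 (M.ren w)
  | _, _, _, w, .inj2 M => .inj2 (M.ren w)
  | _, _, _, w, .scase s M N1 N2 =>
      let r := w.split s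
      .scase r.s' (M.ren r.w1) (N1.ren (.keep _ r.w2)) (N2.ren (.keep _ r.w2))
  | _, _, _, w, .pair s M1 M2 =>
      let r := w.split s
      .pair r.s' (M1.ren r.w1) (M2.ren r.w2)
  | _, _, _, w, .letp s M N =>
      let r := w.split s
      .letp r.s' (M.ren r.w1) (N.ren (.keep _ (.keep _ r.w2)))
  | _, _, _, w, .lam M => .lam (M.ren (.keep _ w))
  | _, _, _, w, .app s M N =>
      let r := w.split s
      .app r.s' (M.ren r.w1) (N.ren r.w2)
  | _, _, _, _, .nil => .nil
  | _, _, _, w, .cons s1 s2 Md Mh Mt =>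
      let r := w.split s1
      let r2 := r.w2.split s2
      .cons r.s' r2.s' (Md.ren r.w1) (Mh.ren r2.w1) (Mt.ren r2.w2)
  | _, _, _, w, .lrec s M N1 N2 =>
      let r := w.split s
      .lrec r.s' (M.ren r.w1) (N1.ren r.w2) N2

theorem Term.ren_sem : {G G' : Ctx} → {A : Tp} → (w : Wk G G') → (M : Term G A) →
    (η : CtxSem G') → (M.ren w).sem η = M.sem (w.sem η)
  | _, _, _, w, .var l, η => Lk.ren_sem w l η
  | _, _, _, _, .null, _ => rfl
  | _, _, _, w, .inj1 M, η => by simp only [Term.ren, Term.sem, Term.ren_sem w M η]; rfl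
  | _, _, _, w, .inj2 M, η => by simp only [Term.ren, Term.sem, Term.ren_sem w M η]; rfl
  | _, _, _, w, .scase s M N1 N2, η => by
      simp only [Term.ren, Term.sem, Term.ren_sem (w.split s).w1 M, (w.split s).h1]
      cases M.sem (s.sub1 (w.sem η)) with
      | inl a => exact (Term.ren_sem (Wk.keep _ (w.split s).w2) N1 _).trans (congrArg (fun e => N1.sem (a, e)) ((w.split s).h2 η))
      | inr b => exact (Term.ren_sem (Wk.keep _ (w.split s).w2) N2 _).trans (congrArg (fun e => N2.sem (b, e)) ((w.split s).h2 η))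
  | _, _, _, w, .pair s M1 M2, η => by
      simp only [Term.ren, Term.sem, Term.ren_sem (w.split s).w1 M1,
        Term.ren_sem (w.split s).w2 M2, (w.split s).h1, (w.split s).h2]; rfl
  | _, _, _, w, .letp s M N, η => by
      simp only [Term.ren, Term.sem, Term.ren_sem (w.split s).w1 M, (w.split s).h1,
        Term.ren_sem (Wk.keep _ (Wk.keep _ (w.split s).w2)) N, Wk.sem, (w.split s).h2]
      exact (Term.ren_sem (Wk.keep _ (Wk.keep _ (w.split s).w2)) N _).trans (congrArg (fun e => N.sem (_, _, e)) ((w.split s).h2 η))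
  | _, _, _, w, .lam M, η => by
      simp only [Term.ren, Term.sem]
      funext a
      exact Term.ren_sem (Wk.keep _ w) M (a, η)
  | _, _, _, w, .app s M N, η => by
      simp only [Term.ren, Term.sem, Term.ren_sem (w.split s).w1 M,
        Term.ren_sem (w.split s).w2 N, (w.split s).h1, (w.split s).h2]
  | _, _, _, _, .nil, _ => rfl
  | _, _, _, w, .cons s1 s2 Md Mh Mt, η => by
      simp only [Term.ren, Term.sem,
        Term.ren_sem ((w.split s1).w2.split s2).w1 Mh,
        Term.ren_sem ((w.split s1).w2.split s2).w2 Mt,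
        ((w.split s1).w2.split s2).h1, ((w.split s1).w2.split s2).h2, (w.split s1).h2]; rfl
  | _, _, _, w, .lrec s M N1 N2, η => by
      simp only [Term.ren, Term.sem, Term.ren_sem (w.split s).w1 M,
        Term.ren_sem (w.split s).w2 N1, (w.split s).h1, (w.split s).h2]

def Wk.closed : (G : Ctx) → Wk [] G
  | [] => .nil
  | o :: G => .drop o (Wk.closed G)

def Term.wkc {C : Tp} (t : Term [] C) (G : Ctx) : Term G C := t.ren (Wk.closed G)

theorem Term.wkc_sem {C : Tp} (t : Term [] C) (G : Ctx) (η : CtxSem G) :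
    (t.wkc G).sem η = t.sem PUnit.unit := Term.ren_sem (Wk.closed G) t η

section Construction
variable {A : Tp}

/-- `T = A ⊗ L(1)`. -/
private abbrev TT (A : Tp) : Tp := .tens A unitL
/-- `F = T ⊸ T`. -/
private abbrev FF (A : Tp) : Tp := .arr (TT A) (TT A)
/-- `B = F ⊗ L(1)`. -/
private abbrev BB (A : Tp) : Tp := .tens (FF A) unitL

/-- Body of the inner lambda: given `p : T` at head, `h : F` at index 2,
apply `h (f p)`. -/
def fBody (f : Term [] (FF A)) :
    Term [some (TT A), none, some (FF A), none, none, none] (TT A) :=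
  .app (.right (.skip (.left (.skip (.skip (.skip .nil))))))
    (.var (.there (.there .here)))
    (.app (.right (.skip (.skip (.skip (.skip (.skip .nil))))))
      (f.wkc _) (.var .here))

/-- The step term of the list recursion. -/
def stepTm (f : Term [] (FF A)) : Term [some (BB A), some .unit, some .dia] (BB A) :=
  .letp (.left (.right (.right .nil))) (.var .here)
    (.pair (.right (.left (.skip (.right (.right .nil)))))
      (.lam (fBody f))
      (.cons (.right (.skip (.skip (.right (.left .nil)))))
             (.right (.skip (.skip (.left (.skip .nil)))))
        (.var (.there (.there (.there (.there .here)))))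
        (.var (.there (.there (.there .here))))
        (.var .here)))

/-- The base term: `(λp. p, nil)`. -/
def baseTm : Term [none, none, none] (BB A) :=
  .pair (.skip (.skip (.skip .nil))) (.lam (.var .here)) .nil

/-- The full iterator. -/
def iterTm (f : Term [] (FF A)) : Term [] (FF A) :=
  .lam <| .letp (.left .nil) (.var .here) <|
    .letp (.left (.right (.skip .nil)))
      (.lrec (.left (.skip (.skip .nil))) (.var .here) baseTm (stepTm f))
      (.app (.right (.left (.skip (.right (.skip .nil)))))
        (.var (.there .here))
        (.pair (.right (.skip (.skip (.left (.skip .nil)))))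
          (.var (.there (.there (.there .here))))
          (.var .here)))

end Construction

theorem step_sem {A : Tp} (f : Term [] (FF A)) (b : (BB A).sem) (a : Unit) :
    (stepTm f).sem (b, (a, ((), PUnit.unit)))
      = (fun p => b.1 (f.sem PUnit.unit p), () :: b.2) := by
  simp only [stepTm, fBody, Term.sem, Split.sub1, Split.sub2, Lk.sem, Term.wkc_sem]
  exact Prod.ext (funext fun p => congrArg b.1 (congrFun (Term.wkc_sem f [none, none, none, none, none, none] PUnit.unit) p)) rfl

theorem foldr_sem {A : Tp} (f : Term [] (FF A)) (n : List Unit) :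
    n.foldr (fun a b => (stepTm f).sem (b, (a, ((), PUnit.unit))))
        ((fun p => p, []) : (BB A).sem)
      = (fun p => (f.sem PUnit.unit)^[n.length] p, n) := by
  induction n with
  | nil => rfl
  | cons a n ih =>
      erw [List.foldr_cons, ih, step_sem]
      refine Prod.ext ?_ rfl
      funext p
      exact (Function.iterate_succ_apply _ _ _).symm

theorem iter_sem {A : Tp} (f : Term [] (FF A)) (x : A.sem) (n : List Unit) :
    (iterTm f).sem PUnit.unit (x, n) = (f.sem PUnit.unit)^[n.length] (x, n) := by
  have h := foldr_sem f n
  simp only [iterTm, baseTm, Term.sem, Split.sub1, Split.sub2, Lk.sem] at h ⊢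
  erw [h]
  rfl


/-- **Linear iteration in LFPL**: for every closed term
`f : (A ⊗ L(1)) ⊸ (A ⊗ L(1))` there is a closed term `f♯` of the same type
whose denotation iterates the denotation of `f` exactly `|n|` times
starting from `(x, n)`. -/
theorem linear_iteration {A : Tp}
    (f : Term [] (.arr (.tens A unitL) (.tens A unitL))) :
    ∃ fs : Term [] (.arr (.tens A unitL) (.tens A unitL)),
      ∀ (x : A.sem) (n : List Unit),
        fs.sem PUnit.unit (x, n) = (f.sem PUnit.unit)^[n.length] (x, n) := by
  exact ⟨iterTm f, iter_sem f⟩
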